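/- Let A be an n×n Hermitian matrix with eigenvalues λ₁(A),…,λₙ(A) and an orthonormal basis of eigenvectors v₁,…,vₙ. For 1 ≤ j ≤ n let M_j be the (n−1)×(n−1) minor of A obtained by deleting the j-th row and column, with eigenvalues λ₁(M_j),…,λ_{n−1}(M_j). Then for all i, j: |v_{i,j}|² · ∏_{k≠i} (λ_i(A) − λ_k(A)) = ∏_{k=1}^{n−1} (λ_i(A) − λ_k(M_j)), where v_{i,j} denotes the j-th component of v_i. -/

import Mathlib

open Matrix

open Polynomial in
theorem adj_of_inv {m : Type*} [Fintype m] [DecidableEq m]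
    (M N : Matrix m m ℂ) (h : M * N = 1) :
    Matrix.adjugate M = M.det • N := by
  calc Matrix.adjugate M = Matrix.adjugate M * (M * N) := by rw [h, Matrix.mul_one]
  _ = (Matrix.adjugate M * M) * N := by rw [Matrix.mul_assoc]
  _ = (M.det • 1) * N := by rw [Matrix.adjugate_mul]
  _ = M.det • N := by rw [Matrix.smul_mul, Matrix.one_mul]

open Polynomial in
theorem eval_charpoly' {m : Type*} [Fintype m] [DecidableEq m]
    (M : Matrix m m ℂ) (c : ℂ) :
    (Matrix.charpoly M).eval c = (c • (1 : Matrix m m ℂ) - M).det := by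
  rw [Matrix.charpoly]
  have : (Matrix.charmatrix M).det.eval c = (evalRingHom c) (Matrix.charmatrix M).det := rfl
  rw [this, RingHom.map_det]
  congr 1
  ext a b
  by_cases hab : a = b
  · subst hab
    simp [Matrix.charmatrix_apply_eq, Matrix.one_apply]
  · simp [Matrix.charmatrix_apply_ne _ _ _ hab, Matrix.one_apply_ne hab]

open Polynomial in
/-- The eigenvector-eigenvalue identity. -/
theorem eigenvector_eigenvalue_identity {n : ℕ}
    (A : Matrix (Fin (n+1)) (Fin (n+1)) ℂ) (hA : A.IsHermitian)
    (lam : Fin (n+1) → ℝ) (v : Fin (n+1) → Fin (n+1) → ℂ)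
    (horth : ∀ i k, dotProduct (star (v i)) (v k) = if i = k then 1 else 0)
    (heig : ∀ i, A.mulVec (v i) = (lam i : ℂ) • v i)
    (mu : Fin (n+1) → Fin n → ℝ)
    (hmu : ∀ j : Fin (n+1), (A.submatrix j.succAbove j.succAbove).charpoly
        = ∏ k, (X - C (mu j k : ℂ)))
    (i j : Fin (n+1)) :
    ‖v i j‖ ^ 2 * ∏ k ∈ Finset.univ.erase i, (lam i - lam k)
      = ∏ k, (lam i - mu j k) := by
  classical
  set c : ℂ := (lam i : ℂ) with hc
  set U : Matrix (Fin (n+1)) (Fin (n+1)) ℂ := Matrix.of fun j i => v i j with hU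
  have hUU : Uᴴ * U = 1 := by
    ext a b
    simpa [Matrix.mul_apply, Matrix.conjTranspose_apply, dotProduct,
      Matrix.one_apply, hU] using horth a b
  have hUU' : U * Uᴴ = 1 := mul_eq_one_comm.mp hUU
  set D : Matrix (Fin (n+1)) (Fin (n+1)) ℂ := Matrix.diagonal fun k => (lam k : ℂ) with hD
  have hAU : A * U = U * D := by
    ext a b
    rw [hD, Matrix.mul_diagonal]
    have h1 := congrFun (heig b) a
    simp only [Matrix.mulVec, dotProduct, Pi.smul_apply, smul_eq_mul] at h1
    simp only [Matrix.mul_apply, hU, Matrix.of_apply]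
    rw [h1, mul_comm]
  have hB : c • (1 : Matrix (Fin (n+1)) (Fin (n+1)) ℂ) - A
      = U * ((c • (1 : Matrix (Fin (n+1)) (Fin (n+1)) ℂ) - D) * Uᴴ) := by
    have : U * ((c • (1 : Matrix (Fin (n+1)) (Fin (n+1)) ℂ) - D) * Uᴴ)
        = c • (1 : Matrix (Fin (n+1)) (Fin (n+1)) ℂ) - A := by
      calc U * ((c • (1 : Matrix (Fin (n+1)) (Fin (n+1)) ℂ) - D) * Uᴴ)
          = U * (c • (1 : Matrix (Fin (n+1)) (Fin (n+1)) ℂ) - D) * Uᴴ := by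
            rw [Matrix.mul_assoc]
      _ = (c • U - U * D) * Uᴴ := by rw [Matrix.mul_sub, Matrix.mul_smul, Matrix.mul_one]
      _ = (c • U - A * U) * Uᴴ := by rw [hAU]
      _ = c • (U * Uᴴ) - A * (U * Uᴴ) := by
            rw [Matrix.sub_mul, Matrix.smul_mul, Matrix.mul_assoc]
      _ = c • 1 - A := by rw [hUU', Matrix.mul_one]
    exact this.symm
  have hDc : c • (1 : Matrix (Fin (n+1)) (Fin (n+1)) ℂ) - D
      = Matrix.diagonal fun k => c - (lam k : ℂ) := by
    ext a b
    by_cases hab : a = b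
    · subst hab; simp [hD, Matrix.one_apply, Matrix.diagonal_apply]
    · simp [hD, Matrix.one_apply_ne hab, Matrix.diagonal_apply_ne _ hab]
  have hadjD : Matrix.adjugate (c • (1 : Matrix (Fin (n+1)) (Fin (n+1)) ℂ) - D)
      = Matrix.diagonal fun l => ∏ k ∈ Finset.univ.erase l, (c - (lam k : ℂ)) := by
    rw [hDc, Matrix.adjugate_diagonal]
  have hdetU : Uᴴ.det * U.det = 1 := by
    rw [← Matrix.det_mul, hUU, Matrix.det_one]
  have hadj : Matrix.adjugate (c • (1 : Matrix (Fin (n+1)) (Fin (n+1)) ℂ) - A)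
      = U * (Matrix.diagonal fun l => ∏ k ∈ Finset.univ.erase l, (c - (lam k : ℂ))) * Uᴴ := by
    rw [hB, Matrix.adjugate_mul_distrib, Matrix.adjugate_mul_distrib,
      adj_of_inv U Uᴴ hUU', adj_of_inv Uᴴ U hUU, hadjD]
    simp only [Matrix.smul_mul, Matrix.mul_smul, smul_smul]
    rw [mul_comm U.det, hdetU, one_smul]
  -- entry (j, j), left expression
  have hentry : (Matrix.adjugate (c • (1 : Matrix (Fin (n+1)) (Fin (n+1)) ℂ) - A)) j j
      = ((‖v i j‖ : ℂ) ^ 2) * ∏ k ∈ Finset.univ.erase i, (c - (lam k : ℂ)) := by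
    rw [hadj, Matrix.mul_apply]
    rw [Finset.sum_eq_single i]
    · rw [Matrix.mul_diagonal, Matrix.conjTranspose_apply]
      have hz : U j i * star (U j i) = ((‖v i j‖ : ℂ) ^ 2) := by
        have : U j i = v i j := rfl
        rw [this]
        rw [show star (v i j) = (starRingEnd ℂ) (v i j) from rfl, Complex.mul_conj]
        rw [Complex.normSq_eq_norm_sq]
        push_cast
        ring
      linear_combination (∏ k ∈ Finset.univ.erase i, (c - (lam k : ℂ))) * hz
    · intro l _ hl
      rw [Matrix.mul_diagonal]
      have hzero : ∏ k ∈ Finset.univ.erase l, (c - (lam k : ℂ)) = 0 := by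
        apply Finset.prod_eq_zero (Finset.mem_erase.mpr ⟨Ne.symm hl, Finset.mem_univ i⟩)
        rw [hc, sub_self]
      rw [hzero, mul_zero, zero_mul]
    · simp
  -- entry (j, j), right expression
  have hentry2 : (Matrix.adjugate (c • (1 : Matrix (Fin (n+1)) (Fin (n+1)) ℂ) - A)) j j
      = ∏ k, (c - (mu j k : ℂ)) := by
    rw [Matrix.adjugate_fin_succ_eq_det_submatrix]
    have hsub : (c • (1 : Matrix (Fin (n+1)) (Fin (n+1)) ℂ) - A).submatrix
        j.succAbove j.succAbove
        = c • (1 : Matrix (Fin n) (Fin n) ℂ) - A.submatrix j.succAbove j.succAbove := by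
      ext a b
      by_cases hab : a = b
      · subst hab; simp [Matrix.one_apply]
      · have : j.succAbove a ≠ j.succAbove b := fun h =>
          hab (Fin.succAbove_right_injective h)
        simp [Matrix.one_apply_ne hab, Matrix.one_apply_ne this]
    rw [hsub, ← eval_charpoly', hmu j, eval_prod]
    simp only [eval_sub, eval_X, eval_C]
    rw [Even.neg_one_pow ⟨(j : ℕ), rfl⟩, one_mul]
  have hkey : ((‖v i j‖ : ℂ) ^ 2) * ∏ k ∈ Finset.univ.erase i, (c - (lam k : ℂ))
      = ∏ k, (c - (mu j k : ℂ)) := hentry.symm.trans hentry2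
  have h2 : ((‖v i j‖ ^ 2 * ∏ k ∈ Finset.univ.erase i, (lam i - lam k) : ℝ) : ℂ)
      = ((∏ k, (lam i - mu j k) : ℝ) : ℂ) := by
    rw [hc] at hkey
    push_cast
    push_cast at hkey
    linear_combination hkey
  exact_mod_cast h2
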